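/- The set of pairs of functions (k₁, k₂) with k₁, k₂ : ℤ → ℤ, k₁(m) ≥ 1 and k₂(m) ≥ 1 for all m ∈ ℤ, and satisfying k₁(m)·k₁(m+1) = (1 + k₂(m))² and k₂(m)·k₂(m+1) = 1 + k₁(m+1) for all m ∈ ℤ, has exactly 10 elements. (These are the arithmetic Y-frieze patterns associated to the type C₂ Cartan matrix [[2,−1],[−2,2]].) -/

import Mathlib

def mk3 (x y z : ℤ) : ℤ → ℤ := fun m => if m % 3 = 0 then x else if m % 3 = 1 then y else z

def IsYF (p : (ℤ → ℤ) × (ℤ → ℤ)) : Prop :=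
  (∀ m, 1 ≤ p.1 m) ∧ (∀ m, 1 ≤ p.2 m) ∧
  (∀ m, p.1 m * p.1 (m + 1) = (1 + p.2 m) ^ 2) ∧
  (∀ m, p.2 m * p.2 (m + 1) = 1 + p.1 (m + 1))

set_option maxHeartbeats 1000000 in
lemma local_class (a b c : ℤ) (ha : 1 ≤ a) (hb : 1 ≤ b) (hc : 1 ≤ c)
    (hab : 1 ≤ a*b - 1) (hbc : 1 ≤ b*c - 1)
    (heq : (a*b-1)*(b*c-1) = (1+b)^2) :
    (a = 2 ∧ b = 1 ∧ c = 5) ∨ (a = 3 ∧ b = 1 ∧ c = 3) ∨ (a = 5 ∧ b = 1 ∧ c = 2) ∨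
    (a = 1 ∧ b = 2 ∧ c = 5) ∨ (a = 2 ∧ b = 2 ∧ c = 2) ∨ (a = 5 ∧ b = 2 ∧ c = 1) ∨
    (a = 1 ∧ b = 3 ∧ c = 3) ∨ (a = 3 ∧ b = 3 ∧ c = 1) ∨
    (a = 1 ∧ b = 5 ∧ c = 2) ∨ (a = 2 ∧ b = 5 ∧ c = 1) := by
  have h2 : b * (a*b*c - (a+b+c+2)) = 0 := by linear_combination heq
  have habc : a*b*c = a+b+c+2 := by
    rcases mul_eq_zero.mp h2 with h | h
    · omega
    · linarith
  have hbc' : 0 ≤ (b-1)*(c-1) := mul_nonneg (by linarith) (by linarith)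
  have hab' : 0 ≤ (a-1)*(b-1) := mul_nonneg (by linarith) (by linarith)
  have hac' : 0 ≤ (a-1)*(c-1) := mul_nonneg (by linarith) (by linarith)
  have hac : 2 ≤ a * c := by
    rcases le_or_gt 2 (a*c) with h | h
    · exact h
    · have ha1 : a = 1 := by nlinarith
      have hc1 : c = 1 := by nlinarith
      rw [ha1, hc1] at habc; linarith
  have ha5 : a ≤ 5 := by nlinarith
  have hb5 : b ≤ 5 := by nlinarith
  have hc5 : c ≤ 5 := by nlinarith
  interval_cases a <;> interval_cases b <;> omega

lemma mk3_sol (b0 b1 b2 : ℤ) (h0 : 1 ≤ b0) (h1 : 1 ≤ b1) (h2 : 1 ≤ b2)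
    (g0 : 1 ≤ b2*b0 - 1) (g1 : 1 ≤ b0*b1 - 1) (g2 : 1 ≤ b1*b2 - 1)
    (e0 : (b2*b0-1)*(b0*b1-1) = (1+b0)^2)
    (e1 : (b0*b1-1)*(b1*b2-1) = (1+b1)^2)
    (e2 : (b1*b2-1)*(b2*b0-1) = (1+b2)^2) :
    IsYF (mk3 (b2*b0-1) (b0*b1-1) (b1*b2-1), mk3 b0 b1 b2) := by
  refine ⟨fun m => ?_, fun m => ?_, fun m => ?_, fun m => ?_⟩ <;>
  · have h3 : m % 3 = 0 ∨ m % 3 = 1 ∨ m % 3 = 2 := by omega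
    rcases h3 with h | h | h <;>
    · have h' : (m+1) % 3 = (m % 3 + 1) % 3 := by omega
      simp only [mk3, h, h']
      norm_num
      all_goals first
      | linarith
      | linear_combination e0
      | linear_combination e1
      | linear_combination e2
      | ring

lemma sol_exists (b0 b1 b2 : ℤ)
    (H : 1 ≤ b0 ∧ 1 ≤ b1 ∧ 1 ≤ b2 ∧ 1 ≤ b2*b0 - 1 ∧ 1 ≤ b0*b1 - 1 ∧ 1 ≤ b1*b2 - 1 ∧
      (b2*b0-1)*(b0*b1-1) = (1+b0)^2 ∧ (b0*b1-1)*(b1*b2-1) = (1+b1)^2 ∧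
      (b1*b2-1)*(b2*b0-1) = (1+b2)^2) :
    ∃ p, IsYF p ∧ p.2 0 = b0 ∧ p.2 1 = b1 := by
  obtain ⟨a1, a2, a3, a4, a5, a6, a7, a8, a9⟩ := H
  exact ⟨_, mk3_sol b0 b1 b2 a1 a2 a3 a4 a5 a6 a7 a8 a9, rfl, rfl⟩

/-- the key triple identity for any Y-frieze -/
lemma triple {p : (ℤ → ℤ) × (ℤ → ℤ)} (hp : IsYF p) (m : ℤ) :
    (p.2 m * p.2 (m+1) - 1) * (p.2 (m+1) * p.2 (m+2) - 1) = (1 + p.2 (m+1))^2 ∧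
    1 ≤ p.2 m * p.2 (m+1) - 1 ∧ 1 ≤ p.2 (m+1) * p.2 (m+2) - 1 := by
  obtain ⟨h1, h2, h3, h4⟩ := hp
  have e1 := h4 m
  have e2 := h4 (m+1)
  have e3 := h3 (m+1)
  rw [show m+1+1 = m+2 by ring] at e2 e3
  have a1 : p.2 m * p.2 (m+1) - 1 = p.1 (m+1) := by linarith
  have a2 : p.2 (m+1) * p.2 (m+2) - 1 = p.1 (m+2) := by linarith
  rw [a1, a2]
  exact ⟨e3, h1 (m+1), h1 (m+2)⟩

lemma fwd {p q : (ℤ → ℤ) × (ℤ → ℤ)} (hp : IsYF p) (hq : IsYF q) (n : ℤ)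
    (h1 : p.2 n = q.2 n) (h2 : p.2 (n+1) = q.2 (n+1)) : p.2 (n+2) = q.2 (n+2) := by
  obtain ⟨ep, gp1, gp2⟩ := triple hp n
  obtain ⟨eq', gq1, gq2⟩ := triple hq n
  rw [← h1, ← h2] at eq'
  have hX : p.2 n * p.2 (n+1) - 1 ≠ 0 := by intro h; rw [h] at gp1; norm_num at gp1
  have hc := mul_left_cancel₀ hX (ep.trans eq'.symm)
  have hB : p.2 (n+1) ≠ 0 := by
    have := hp.2.1 (n+1); intro h; rw [h] at this; norm_num at this
  have : p.2 (n+1) * p.2 (n+2) = p.2 (n+1) * q.2 (n+2) := by linarith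
  exact mul_left_cancel₀ hB this

lemma bwd {p q : (ℤ → ℤ) × (ℤ → ℤ)} (hp : IsYF p) (hq : IsYF q) (n : ℤ)
    (h1 : p.2 (n+1) = q.2 (n+1)) (h2 : p.2 (n+2) = q.2 (n+2)) : p.2 n = q.2 n := by
  obtain ⟨ep, gp1, gp2⟩ := triple hp n
  obtain ⟨eq', gq1, gq2⟩ := triple hq n
  rw [← h1, ← h2] at eq'
  have hY : p.2 (n+1) * p.2 (n+2) - 1 ≠ 0 := by intro h; rw [h] at gp2; norm_num at gp2
  have hc := mul_right_cancel₀ hY (ep.trans eq'.symm)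
  have hB : p.2 (n+1) ≠ 0 := by
    have := hp.2.1 (n+1); intro h; rw [h] at this; norm_num at this
  have : p.2 n * p.2 (n+1) = q.2 n * p.2 (n+1) := by linarith
  exact mul_right_cancel₀ hB this

lemma yf_inj {p q : (ℤ → ℤ) × (ℤ → ℤ)} (hp : IsYF p) (hq : IsYF q)
    (h0 : p.2 0 = q.2 0) (h1 : p.2 1 = q.2 1) : p = q := by
  have key : ∀ n : ℤ, p.2 n = q.2 n ∧ p.2 (n+1) = q.2 (n+1) := by
    intro n
    induction n using Int.induction_on with
    | zero => exact ⟨h0, by norm_num; exact h1⟩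
    | succ k ih =>
      refine ⟨ih.2, ?_⟩
      rw [show (k:ℤ)+1+1 = k+2 by ring]
      exact fwd hp hq k ih.1 ih.2
    | pred k ih =>
      constructor
      · refine bwd hp hq (-(k:ℤ)-1) ?_ ?_
        · rw [show (-(k:ℤ)-1)+1 = -k by ring]; exact ih.1
        · rw [show (-(k:ℤ)-1)+2 = -k+1 by ring]; exact ih.2
      · rw [show (-(k:ℤ)-1)+1 = -(k:ℤ) by ring]; exact ih.1
  have h2 : p.2 = q.2 := funext fun n => (key n).1
  have h1' : p.1 = q.1 := by
    funext m
    have ep := hp.2.2.2 (m-1)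
    have eq' := hq.2.2.2 (m-1)
    rw [show m-1+1 = m by ring] at ep eq'
    rw [h2] at ep
    linarith
  exact Prod.ext h1' h2

set_option maxHeartbeats 2000000 in
theorem card_Yfrieze_C2 :
    Nat.card {p : (ℤ → ℤ) × (ℤ → ℤ) //
      (∀ m, 1 ≤ p.1 m) ∧ (∀ m, 1 ≤ p.2 m) ∧
      (∀ m, p.1 m * p.1 (m + 1) = (1 + p.2 m) ^ 2) ∧
      (∀ m, p.2 m * p.2 (m + 1) = 1 + p.1 (m + 1))} = 10 := by
  have step1 : Nat.card {p : (ℤ → ℤ) × (ℤ → ℤ) // IsYF p} = 10 := by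
    have hcoe : Nat.card {p : (ℤ → ℤ) × (ℤ → ℤ) // IsYF p}
        = Set.ncard {p : (ℤ → ℤ) × (ℤ → ℤ) | IsYF p} := Nat.card_coe_set_eq _
    rw [hcoe]
    set Tf : Finset (ℤ × ℤ) :=
      {(1,2),(2,5),(5,1),(1,3),(3,3),(3,1),(1,5),(5,2),(2,1),(2,2)} with hTf
    have hinj : Set.InjOn (fun p : (ℤ → ℤ) × (ℤ → ℤ) => (p.2 0, p.2 1))
        {p | IsYF p} := by
      intro p hp q hq hpq
      simp only [Prod.mk.injEq] at hpq
      exact yf_inj hp hq hpq.1 hpq.2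
    have himg : (fun p : (ℤ → ℤ) × (ℤ → ℤ) => (p.2 0, p.2 1)) '' {p | IsYF p}
        = (Tf : Set (ℤ × ℤ)) := by
      ext ⟨x, y⟩
      simp only [Set.mem_image, Set.mem_setOf_eq, Finset.coe_insert, Set.mem_insert_iff,
        Finset.coe_singleton, Set.mem_singleton_iff, Prod.mk.injEq, hTf]
      constructor
      · rintro ⟨p, hp, hx, hy⟩
        subst hx; subst hy
        obtain ⟨e3, g1, g2⟩ := triple hp 0
        norm_num at e3 g1 g2
        have H := local_class (p.2 0) (p.2 1) (p.2 2) (hp.2.1 0) (hp.2.1 1) (hp.2.1 2)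
          (by linarith) (by linarith) e3
        rcases H with h|h|h|h|h|h|h|h|h|h <;>
          simp only [h.1, h.2.1] <;> norm_num
      · rintro (⟨hx, hy⟩|⟨hx, hy⟩|⟨hx, hy⟩|⟨hx, hy⟩|⟨hx, hy⟩|⟨hx, hy⟩|⟨hx, hy⟩|⟨hx, hy⟩|⟨hx, hy⟩|⟨hx, hy⟩) <;> subst hx <;> subst hy
        · obtain ⟨p, h, e0, e1⟩ := sol_exists 1 2 5 (by norm_num); exact ⟨p, h, e0, e1⟩
        · obtain ⟨p, h, e0, e1⟩ := sol_exists 2 5 1 (by norm_num); exact ⟨p, h, e0, e1⟩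
        · obtain ⟨p, h, e0, e1⟩ := sol_exists 5 1 2 (by norm_num); exact ⟨p, h, e0, e1⟩
        · obtain ⟨p, h, e0, e1⟩ := sol_exists 1 3 3 (by norm_num); exact ⟨p, h, e0, e1⟩
        · obtain ⟨p, h, e0, e1⟩ := sol_exists 3 3 1 (by norm_num); exact ⟨p, h, e0, e1⟩
        · obtain ⟨p, h, e0, e1⟩ := sol_exists 3 1 3 (by norm_num); exact ⟨p, h, e0, e1⟩
        · obtain ⟨p, h, e0, e1⟩ := sol_exists 1 5 2 (by norm_num); exact ⟨p, h, e0, e1⟩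
        · obtain ⟨p, h, e0, e1⟩ := sol_exists 5 2 1 (by norm_num); exact ⟨p, h, e0, e1⟩
        · obtain ⟨p, h, e0, e1⟩ := sol_exists 2 1 5 (by norm_num); exact ⟨p, h, e0, e1⟩
        · obtain ⟨p, h, e0, e1⟩ := sol_exists 2 2 2 (by norm_num); exact ⟨p, h, e0, e1⟩
    calc Set.ncard {p : (ℤ → ℤ) × (ℤ → ℤ) | IsYF p}
        = ((fun p : (ℤ → ℤ) × (ℤ → ℤ) => (p.2 0, p.2 1)) '' {p | IsYF p}).ncard :=
          (Set.ncard_image_of_injOn hinj).symm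
      _ = (Tf : Set (ℤ × ℤ)).ncard := by rw [himg]
      _ = Tf.card := Set.ncard_coe_finset _
      _ = 10 := by rfl
  exact step1
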